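/- Fix $n$ and $0 < r < 1$ with $k = \lfloor rn \rfloor \geq 1$, and write $n = pk + q$ with $0 \leq q < k$. For every graph $G$ on $n$ vertices, $CO_e^r(G) \leq \binom{n}{2} - p\binom{k}{2} - \binom{q}{2}$; that is, the complete graph $K_n$ maximizes $CO_e^r$ over all graphs on $n$ vertices, with value $\binom{n}{2} - p\binom{k}{2} - \binom{q}{2}$. -/

import Mathlib

open SimpleGraph

/-- A graph is in a *failure state* for threshold `k` if every connected
component has order at most `k`. -/
def failureState {V : Type*} (G : SimpleGraph V) (k : ℕ) : Prop :=
  ∀ v : V, (G.connectedComponentMk v).supp.ncard ≤ k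

/-- `S` is a vertex disconnecting set: removing the vertices of `S` from `G`
leaves every component with at most `k` vertices. -/
def vertexDisconnects {V : Type*} (G : SimpleGraph V) (k : ℕ) (S : Set V) : Prop :=
  failureState (G.induce Sᶜ) k

/-- Component order proportion vertex connectivity: minimum size of a vertex
disconnecting set. -/
noncomputable def COv {V : Type*} (G : SimpleGraph V) (k : ℕ) : ℕ :=
  sInf {c | ∃ S : Set V, S.ncard = c ∧ vertexDisconnects G k S}

/-- Component order proportion edge connectivity: minimum size of an edge
disconnecting set. -/
noncomputable def COe {V : Type*} (G : SimpleGraph V) (k : ℕ) : ℕ :=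
  sInf {c | ∃ E' : Set (Sym2 V), E' ⊆ G.edgeSet ∧ E'.ncard = c ∧
    failureState (G.deleteEdges E') k}

/-- Minimum of `COv` over all graphs with `n` vertices and `m` edges. -/
noncomputable def gminV (n k m : ℕ) : ℕ :=
  sInf {c | ∃ G : SimpleGraph (Fin n), G.edgeSet.ncard = m ∧ COv G k = c}

/-- Minimum of `COe` over all graphs with `n` vertices and `m` edges. -/
noncomputable def gminE (n k m : ℕ) : ℕ :=
  sInf {c | ∃ G : SimpleGraph (Fin n), G.edgeSet.ncard = m ∧ COe G k = c}

open Finset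

private lemma reach_eq_of_adj_eq {V : Type*} {G : SimpleGraph V} {f : V → ℕ}
    (h : ∀ a b, G.Adj a b → f a = f b) {u v : V} (hr : G.Reachable u v) : f u = f v := by
  obtain ⟨w⟩ := hr
  induction w with
  | nil => rfl
  | cons h' _ ih => exact (h _ _ h').trans ih

private lemma sq_sum_lemma {k : ℕ} {α : Type*} [DecidableEq α] (s : Finset α)
    (t : α → ℕ) (hle : ∀ i ∈ s, t i ≤ k) :
    ∀ p q : ℕ, q < k → (∑ i ∈ s, t i) = p * k + q → ∑ i ∈ s, (t i) ^ 2 ≤ p * k ^ 2 + q ^ 2 := by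
  induction s using Finset.induction_on with
  | empty => intro p q _ _; simpa using Nat.zero_le _
  | @insert a s ha ih =>
    intro p q hq hsum
    rw [Finset.sum_insert ha] at hsum ⊢
    have hta : t a ≤ k := hle a (Finset.mem_insert_self a s)
    have hle' : ∀ i ∈ s, t i ≤ k := fun i hi => hle i (Finset.mem_insert_of_mem hi)
    by_cases hcase : t a ≤ q
    · have h2 := ih hle' p (q - t a) (by omega) (by omega)
      have key : (q - t a) ^ 2 + (t a) ^ 2 ≤ q ^ 2 := by
        have hb : (q - t a) + t a = q := by omega
        nlinarith [Nat.zero_le ((q - t a) * t a)]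
      nlinarith [h2, key]
    · push_neg at hcase
      have hpk : 0 < p * k := by omega
      have hp : 0 < p := Nat.pos_of_ne_zero fun h => by subst h; simp at hpk
      have e1 : (p - 1) * k + k = p * k := by
        rw [Nat.sub_one_mul]
        have : k ≤ p * k := Nat.le_mul_of_pos_left k hp
        omega
      have h2 := ih hle' (p - 1) (k + q - t a) (by omega) (by omega)
      have e2 : (p - 1) * k ^ 2 + k ^ 2 = p * k ^ 2 := by
        rw [Nat.sub_one_mul]
        have : k ^ 2 ≤ p * k ^ 2 := Nat.le_mul_of_pos_left _ hp
        omega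
      have key : (k + q - t a) ^ 2 + (t a) ^ 2 ≤ k ^ 2 + q ^ 2 := by
        obtain ⟨x, hx⟩ := Nat.exists_eq_add_of_lt hcase
        obtain ⟨y, hy⟩ := Nat.exists_eq_add_of_le hta
        have hd : k + q - t a = q + y := by omega
        rw [hd, hx, hy]
        nlinarith [Nat.zero_le (x * y)]
      omega

/-- Any graph on `Fin n` in a failure state for `k` has few edges. -/
private lemma edges_le_of_failure {n p q k : ℕ} (hn : n = p * k + q) (hq : q < k)
    (G' : SimpleGraph (Fin n)) (hfail : failureState G' k) :
    2 * G'.edgeSet.ncard + n ≤ p * k ^ 2 + q ^ 2 := by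
  classical
  letI : DecidableRel G'.Adj := Classical.decRel _
  have hnc : G'.edgeSet.ncard = #G'.edgeFinset := by
    simp [Set.ncard_eq_toFinset_card', SimpleGraph.edgeFinset]
  rw [hnc]
  set m : Fin n → G'.ConnectedComponent := fun v => G'.connectedComponentMk v with hm
  have suppcard : ∀ C : G'.ConnectedComponent,
      C.supp.ncard = #(univ.filter fun v : Fin n => m v = C) := by
    intro C
    rw [Set.ncard_eq_toFinset_card']
    apply congrArg Finset.card
    ext w
    simp [ConnectedComponent.mem_supp_iff, hm]
  have hdeg : ∀ v : Fin n, G'.degree v + 1 ≤ #(univ.filter fun w : Fin n => m w = m v) := by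
    intro v
    rw [← SimpleGraph.card_neighborFinset_eq_degree]
    have hsub : G'.neighborFinset v ⊆ (univ.filter fun w : Fin n => m w = m v).erase v := by
      intro w hw
      rw [SimpleGraph.mem_neighborFinset] at hw
      rw [Finset.mem_erase, Finset.mem_filter]
      exact ⟨hw.ne', Finset.mem_univ _, ConnectedComponent.sound hw.symm.reachable⟩
    have hvm : v ∈ univ.filter fun w : Fin n => m w = m v := by simp
    calc #(G'.neighborFinset v) + 1
        ≤ #((univ.filter fun w : Fin n => m w = m v).erase v) + 1 :=
          Nat.add_le_add_right (Finset.card_le_card hsub) 1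
      _ = #(univ.filter fun w : Fin n => m w = m v) := Finset.card_erase_add_one hvm
  have bigS : ∑ v : Fin n, #(univ.filter fun w : Fin n => m w = m v) ≤ p * k ^ 2 + q ^ 2 := by
    rw [← Finset.sum_fiberwise_of_maps_to' (fun v _ => Finset.mem_image_of_mem m (mem_univ v))
      (fun C => #(univ.filter fun w : Fin n => m w = C))]
    have inner : ∀ C, (∑ _i ∈ univ.filter (fun v : Fin n => m v = C),
        #(univ.filter fun w : Fin n => m w = C))
        = (#(univ.filter fun w : Fin n => m w = C)) ^ 2 := by
      intro C; rw [Finset.sum_const, smul_eq_mul]; ring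
    rw [Finset.sum_congr rfl fun C _ => inner C]
    refine sq_sum_lemma _ _ ?_ p q hq ?_
    · intro C hC
      obtain ⟨v, _, rfl⟩ := Finset.mem_image.1 hC
      rw [← suppcard]
      exact hfail v
    · have h := Finset.card_eq_sum_card_image m (univ : Finset (Fin n))
      simp only [Finset.card_univ, Fintype.card_fin] at h
      rw [← h]
      exact hn
  have hsumdeg := SimpleGraph.sum_degrees_eq_twice_card_edges G'
  have hfin : ∑ v : Fin n, (G'.degree v + 1) ≤ p * k ^ 2 + q ^ 2 :=
    le_trans (Finset.sum_le_sum fun v _ => hdeg v) bigS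
  rw [Finset.sum_add_distrib] at hfin
  simp only [Finset.sum_const, Finset.card_univ, Fintype.card_fin, smul_eq_mul, mul_one] at hfin
  omega

theorem COe_max_complete (n p q : ℕ) (r : ℝ) (hr0 : 0 < r) (hr1 : r < 1)
    (k : ℕ) (hk : k = ⌊r * n⌋₊) (hk1 : 1 ≤ k) (hn : n = p * k + q) (hq : q < k) :
    (∀ G : SimpleGraph (Fin n),
        COe G k ≤ n.choose 2 - p * k.choose 2 - q.choose 2) ∧
      COe (⊤ : SimpleGraph (Fin n)) k =
        n.choose 2 - p * k.choose 2 - q.choose 2 := by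
  classical
  have hk0 : 0 < k := hk1
  set f : Fin n → ℕ := fun v => (v : ℕ) / k with hf
  -- fiber characterization and cardinalities
  have hmem : ∀ (v : Fin n) (j : ℕ), f v = j ↔ j * k ≤ (v : ℕ) ∧ (v : ℕ) < (j + 1) * k := by
    intro v j
    constructor
    · intro h
      constructor
      · exact (Nat.le_div_iff_mul_le hk0).1 (le_of_eq h.symm)
      · have h' : (v : ℕ) / k = j := h
        exact (Nat.div_lt_iff_lt_mul hk0).1 (by omega)
    · rintro ⟨h1, h2⟩
      have l1 : j ≤ (v : ℕ) / k := (Nat.le_div_iff_mul_le hk0).2 h1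
      have l2 : (v : ℕ) / k < j + 1 := (Nat.div_lt_iff_lt_mul hk0).2 h2
      simp only [hf]; omega
  have fibcard : ∀ j : ℕ, #(univ.filter fun v : Fin n => f v = j)
      = min ((j + 1) * k) n - j * k := by
    intro j
    rw [← Nat.card_Ico (j * k) (min ((j + 1) * k) n)]
    apply Finset.card_bij (fun (v : Fin n) _ => (v : ℕ))
    · intro v hv
      rw [Finset.mem_filter] at hv
      rw [Finset.mem_Ico, lt_min_iff]
      have := (hmem v j).1 hv.2
      exact ⟨this.1, this.2, v.isLt⟩
    · intro a _ b _ h; exact Fin.val_injective h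
    · intro m hm
      rw [Finset.mem_Ico, lt_min_iff] at hm
      refine ⟨⟨m, hm.2.2⟩, ?_, rfl⟩
      rw [Finset.mem_filter]
      exact ⟨Finset.mem_univ _, (hmem _ j).2 ⟨hm.1, hm.2.1⟩⟩
  have fib_le : ∀ j : ℕ, #(univ.filter fun v : Fin n => f v = j) ≤ k := by
    intro j
    rw [fibcard]
    have e : (j + 1) * k = j * k + k := by ring
    omega
  have fib_lt_p : ∀ j < p, #(univ.filter fun v : Fin n => f v = j) = k := by
    intro j hj
    rw [fibcard]
    have e : (j + 1) * k = j * k + k := by ring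
    have e2 : (j + 1) * k ≤ p * k := Nat.mul_le_mul_right k (by omega)
    omega
  have fib_p : #(univ.filter fun v : Fin n => f v = p) = q := by
    rw [fibcard]
    have e : (p + 1) * k = p * k + k := by ring
    omega
  have fmaps : ∀ v : Fin n, f v ∈ Finset.range (p + 1) := by
    intro v
    rw [Finset.mem_range]
    have : (v : ℕ) < (p + 1) * k := by
      have hvn := v.isLt
      have e : (p + 1) * k = p * k + k := by ring
      omega
    exact (Nat.div_lt_iff_lt_mul hk0).2 this
  have bigS : ∑ v : Fin n, #(univ.filter fun w : Fin n => f w = f v) = p * k ^ 2 + q ^ 2 := by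
    rw [← Finset.sum_fiberwise_of_maps_to' (fun v _ => fmaps v)
      (fun j => #(univ.filter fun w : Fin n => f w = j))]
    rw [Finset.sum_range_succ]
    have inner : ∀ j, (∑ _i ∈ univ.filter (fun v : Fin n => f v = j),
        #(univ.filter fun w : Fin n => f w = j))
        = #(univ.filter fun v : Fin n => f v = j) * #(univ.filter fun w : Fin n => f w = j) := by
      intro j; rw [Finset.sum_const, smul_eq_mul]
    calc (∑ j ∈ Finset.range p, ∑ _i ∈ univ.filter (fun v : Fin n => f v = j),
            #(univ.filter fun w : Fin n => f w = j))
          + ∑ _i ∈ univ.filter (fun v : Fin n => f v = p),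
            #(univ.filter fun w : Fin n => f w = p)
        = (∑ _j ∈ Finset.range p, k * k) + q * q := by
          rw [inner p, fib_p]
          congr 1
          apply Finset.sum_congr rfl
          intro j hj
          rw [inner j, fib_lt_p j (Finset.mem_range.1 hj)]
      _ = p * k ^ 2 + q ^ 2 := by rw [Finset.sum_const, Finset.card_range, smul_eq_mul]; ring
  -- the block graph H
  set H : SimpleGraph (Fin n) :=
    { Adj := fun a b => a ≠ b ∧ f a = f b
      symm := ⟨fun a b hab => ⟨hab.1.symm, hab.2.symm⟩⟩
      loopless := ⟨fun a h => h.1 rfl⟩ } with hH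
  letI : DecidableRel H.Adj := fun a b => instDecidableAnd
  have hdeg : ∀ v : Fin n, H.degree v + 1 = #(univ.filter fun w : Fin n => f w = f v) := by
    intro v
    rw [← SimpleGraph.card_neighborFinset_eq_degree]
    have : H.neighborFinset v = (univ.filter fun w : Fin n => f w = f v).erase v := by
      ext w
      simp only [SimpleGraph.mem_neighborFinset, Finset.mem_erase, Finset.mem_filter,
        Finset.mem_univ, true_and, hH]
      constructor
      · rintro ⟨h1, h2⟩; exact ⟨Ne.symm h1, h2.symm⟩
      · rintro ⟨h1, h2⟩; exact ⟨Ne.symm h1, h2.symm⟩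
    rw [this, Finset.card_erase_add_one]
    simp
  have hsum : ∑ v : Fin n, H.degree v + n = p * k ^ 2 + q ^ 2 := by
    rw [← bigS]
    have e : ∑ v : Fin n, #(univ.filter fun w : Fin n => f w = f v)
        = ∑ v : Fin n, (H.degree v + 1) :=
      Finset.sum_congr rfl fun v _ => (hdeg v).symm
    rw [e, Finset.sum_add_distrib]
    simp [Finset.card_univ]
  have harel : 2 * (p * k.choose 2 + q.choose 2) + n = p * k ^ 2 + q ^ 2 := by
    have t1 : ∀ t : ℕ, 2 * t.choose 2 = t * (t - 1) := by
      intro t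
      rw [Nat.choose_two_right]
      cases t with
      | zero => rfl
      | succ s =>
        rw [Nat.mul_div_cancel']
        simpa [Nat.mul_comm] using (Nat.even_mul_succ_self s).two_dvd
    have tri : ∀ t : ℕ, t * (t - 1) + t = t ^ 2 := by
      intro t
      cases t with
      | zero => rfl
      | succ s => simp [Nat.succ_sub_one]; ring
    calc 2 * (p * k.choose 2 + q.choose 2) + n
        = p * (2 * k.choose 2) + 2 * q.choose 2 + (p * k + q) := by rw [hn]; ring
      _ = p * (k * (k - 1) + k) + (q * (q - 1) + q) := by rw [t1, t1]; ring
      _ = p * k ^ 2 + q ^ 2 := by rw [tri, tri]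
  have hsumdegH := SimpleGraph.sum_degrees_eq_twice_card_edges H
  have hEH : #H.edgeFinset = p * k.choose 2 + q.choose 2 := by omega
  have ncard_eq : ∀ (G : SimpleGraph (Fin n)) (_ : Fintype G.edgeSet),
      G.edgeSet.ncard = #G.edgeFinset := by
    intro G hG
    have := Set.ncard_coe_finset G.edgeFinset
    rwa [SimpleGraph.coe_edgeFinset] at this
  have hEHn : H.edgeSet.ncard = p * k.choose 2 + q.choose 2 := by
    rw [ncard_eq H inferInstance, hEH]
  have htopn : (⊤ : SimpleGraph (Fin n)).edgeSet.ncard = n.choose 2 := by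
    rw [ncard_eq ⊤ inferInstance]
    rw [SimpleGraph.card_edgeFinset_top_eq_card_choose_two]
    simp
  have hHsub : H.edgeSet ⊆ (⊤ : SimpleGraph (Fin n)).edgeSet :=
    SimpleGraph.edgeSet_mono le_top
  have hXle : p * k.choose 2 + q.choose 2 ≤ n.choose 2 := by
    rw [← hEHn, ← htopn]
    exact Set.ncard_le_ncard hHsub (Set.toFinite _)
  have hdiff : ((⊤ : SimpleGraph (Fin n)).edgeSet \ H.edgeSet).ncard
      = n.choose 2 - (p * k.choose 2 + q.choose 2) := by
    rw [Set.ncard_diff hHsub, htopn, hEHn]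
  -- failure state from deleting the cross edges
  have hfailH : ∀ G : SimpleGraph (Fin n),
      failureState (G.deleteEdges (G.edgeSet \ H.edgeSet)) k := by
    intro G v
    set G2 := G.deleteEdges (G.edgeSet \ H.edgeSet) with hG2
    have hadj : ∀ a b, G2.Adj a b → f a = f b := by
      intro a b hab
      rw [hG2, SimpleGraph.deleteEdges_adj] at hab
      have hHe : s(a, b) ∈ H.edgeSet := by
        by_contra hmm
        exact hab.2 ⟨(SimpleGraph.mem_edgeSet G).2 hab.1, hmm⟩
      exact ((SimpleGraph.mem_edgeSet H).1 hHe).2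
    have hsupp : (G2.connectedComponentMk v).supp ⊆ {w | f w = f v} := by
      intro w hw
      rw [ConnectedComponent.mem_supp_iff] at hw
      have hr : G2.Reachable w v := (SimpleGraph.ConnectedComponent.eq).1 hw
      exact reach_eq_of_adj_eq hadj hr
    calc (G2.connectedComponentMk v).supp.ncard
        ≤ ({w : Fin n | f w = f v}).ncard := Set.ncard_le_ncard hsupp (Set.toFinite _)
      _ = #(univ.filter fun w : Fin n => f w = f v) := by
          rw [Set.ncard_eq_toFinset_card']
          apply congrArg Finset.card
          ext w
          simp
      _ ≤ k := fib_le (f v)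
  -- membership of the cross-edge witness
  have hmemset : ∀ G : SimpleGraph (Fin n),
      (G.edgeSet \ H.edgeSet).ncard ∈ {c | ∃ E' : Set (Sym2 (Fin n)), E' ⊆ G.edgeSet ∧
        E'.ncard = c ∧ failureState (G.deleteEdges E') k} :=
    fun G => ⟨G.edgeSet \ H.edgeSet, Set.diff_subset, rfl, hfailH G⟩
  have hcardE' : ∀ G : SimpleGraph (Fin n),
      (G.edgeSet \ H.edgeSet).ncard ≤ n.choose 2 - p * k.choose 2 - q.choose 2 := by
    intro G
    have h1 : (G.edgeSet \ H.edgeSet).ncard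
        ≤ ((⊤ : SimpleGraph (Fin n)).edgeSet \ H.edgeSet).ncard :=
      Set.ncard_le_ncard (Set.diff_subset_diff_left (SimpleGraph.edgeSet_mono le_top))
        (Set.toFinite _)
    rw [hdiff] at h1
    omega
  have part1 : ∀ G : SimpleGraph (Fin n),
      COe G k ≤ n.choose 2 - p * k.choose 2 - q.choose 2 :=
    fun G => le_trans (Nat.sInf_le (hmemset G)) (hcardE' G)
  refine ⟨part1, le_antisymm (part1 ⊤) ?_⟩
  -- lower bound for the complete graph
  have hne : {c | ∃ E' : Set (Sym2 (Fin n)), E' ⊆ (⊤ : SimpleGraph (Fin n)).edgeSet ∧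
      E'.ncard = c ∧ failureState ((⊤ : SimpleGraph (Fin n)).deleteEdges E') k}.Nonempty :=
    ⟨_, hmemset ⊤⟩
  obtain ⟨E', hEsub, hEc, hEfail⟩ := Nat.sInf_mem hne
  rw [COe, ← hEc]
  set G' := (⊤ : SimpleGraph (Fin n)).deleteEdges E' with hG'
  have hedge : G'.edgeSet = (⊤ : SimpleGraph (Fin n)).edgeSet \ E' :=
    SimpleGraph.edgeSet_deleteEdges E'
  have hEdiff : G'.edgeSet.ncard = n.choose 2 - E'.ncard := by
    rw [hedge, Set.ncard_diff hEsub, htopn]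
  have hEle : E'.ncard ≤ n.choose 2 := by
    rw [← htopn]
    exact Set.ncard_le_ncard hEsub (Set.toFinite _)
  have hcomp := edges_le_of_failure hn hq G' hEfail
  omega
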